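/- Let X = (X_t)_{t∈[0,1]} be a real-valued stochastic process on a probability space (Ω, F, P) with E[X_t²] < ∞ for all t, satisfying (A1) with constants C₁ > 0, H₁ ∈ (0,1], (A2) with constants C₂ > 0, H₂ ∈ (0,1], and (B⁻). Then H₂ ≤ 1/2. -/

import Mathlib

open MeasureTheory Set

/-- Remark 3.1: for a square-integrable process on `[0,1]`, conditions (A1), (A2) and (B⁻)
imply `H₂ ≤ 1/2`. -/
theorem H2_le_half_of_A1_A2_Bminus {Ω : Type*} [MeasurableSpace Ω]
    (P : Measure Ω) [IsProbabilityMeasure P] (X : ℝ → Ω → ℝ)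
    (C₁ C₂ H₁ H₂ : ℝ)
    (hL2 : ∀ t ∈ Set.Icc (0 : ℝ) 1, MemLp (X t) 2 P)
    (hC₁ : 0 < C₁) (hC₂ : 0 < C₂)
    (hH₁ : H₁ ∈ Set.Ioc (0 : ℝ) 1) (hH₂ : H₂ ∈ Set.Ioc (0 : ℝ) 1)
    (hA1 : ∀ s ∈ Set.Icc (0 : ℝ) 1, ∀ t ∈ Set.Icc (0 : ℝ) 1,
      C₁ * |t - s| ^ (2 * H₁) ≤ ∫ ω, (X t ω - X s ω) ^ 2 ∂P)
    (hA2 : ∀ s ∈ Set.Icc (0 : ℝ) 1, ∀ t ∈ Set.Icc (0 : ℝ) 1,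
      ∫ ω, (X t ω - X s ω) ^ 2 ∂P ≤ C₂ * |t - s| ^ (2 * H₂))
    (hB : ∀ s₁ t₁ s₂ t₂ : ℝ, 0 ≤ s₁ → s₁ ≤ t₁ → t₁ ≤ s₂ → s₂ ≤ t₂ → t₂ ≤ 1 →
      ∫ ω, (X t₁ ω - X s₁ ω) * (X t₂ ω - X s₂ ω) ∂P ≤ 0) :
    H₂ ≤ 1 / 2 := by
  by_contra hcon
  push_neg at hcon
  -- product of two L² functions is integrable
  have hprod : ∀ f g : Ω → ℝ, MemLp f 2 P → MemLp g 2 P →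
      Integrable (fun ω => f ω * g ω) P := by
    intro f g hf hg
    refine Integrable.mono' (((hf.integrable_sq.add hg.integrable_sq)).div_const 2)
      (hf.aestronglyMeasurable.mul hg.aestronglyMeasurable)
      (Filter.Eventually.of_forall fun ω => ?_)
    rw [Real.norm_eq_abs]
    simp only [Pi.add_apply]
    rcases abs_cases (f ω * g ω) with ⟨h, _⟩ | ⟨h, _⟩ <;> rw [h] <;>
      nlinarith [sq_nonneg (f ω - g ω), sq_nonneg (f ω + g ω)]
  -- splitting inequality
  have hsplit : ∀ s t : ℝ, 0 ≤ s → s ≤ t → t ≤ 1 →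
      ∫ ω, (X t ω - X s ω) ^ 2 ∂P ≤
        (∫ ω, (X ((s + t) / 2) ω - X s ω) ^ 2 ∂P) +
        (∫ ω, (X t ω - X ((s + t) / 2) ω) ^ 2 ∂P) := by
    intro s t hs hst ht
    set m := (s + t) / 2 with hm
    have hsm : s ≤ m := by rw [hm]; linarith
    have hmt : m ≤ t := by rw [hm]; linarith
    have hsI : s ∈ Set.Icc (0 : ℝ) 1 := ⟨hs, le_trans hst ht⟩
    have htI : t ∈ Set.Icc (0 : ℝ) 1 := ⟨le_trans hs hst, ht⟩
    have hmI : m ∈ Set.Icc (0 : ℝ) 1 := ⟨le_trans hs hsm, le_trans hmt ht⟩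
    have h1 : MemLp (fun ω => X m ω - X s ω) 2 P := (hL2 m hmI).sub (hL2 s hsI)
    have h2 : MemLp (fun ω => X t ω - X m ω) 2 P := (hL2 t htI).sub (hL2 m hmI)
    have hi1 : Integrable (fun ω => (X m ω - X s ω) ^ 2) P := h1.integrable_sq
    have hi2 : Integrable (fun ω => (X t ω - X m ω) ^ 2) P := h2.integrable_sq
    have hip : Integrable (fun ω => (X m ω - X s ω) * (X t ω - X m ω)) P :=
      hprod _ _ h1 h2
    have hexp : ∫ ω, (X t ω - X s ω) ^ 2 ∂P =
        (∫ ω, (X m ω - X s ω) ^ 2 ∂P) + (∫ ω, (X t ω - X m ω) ^ 2 ∂P) +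
        2 * ∫ ω, (X m ω - X s ω) * (X t ω - X m ω) ∂P := by
      have hfun : (fun ω => (X t ω - X s ω) ^ 2) =
          fun ω => (X m ω - X s ω) ^ 2 + ((X t ω - X m ω) ^ 2 +
            2 * ((X m ω - X s ω) * (X t ω - X m ω))) := by
        funext ω; ring
      have hi3 : Integrable (fun ω => (X t ω - X m ω) ^ 2 +
          2 * ((X m ω - X s ω) * (X t ω - X m ω))) P := hi2.add (hip.const_mul 2)
      rw [hfun, integral_add hi1 hi3, integral_add hi2 (hip.const_mul 2),
        integral_const_mul]
      ring
    have hBneg := hB s m m t hs hsm le_rfl hmt ht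
    linarith
  -- dyadic iteration
  have hdyad : ∀ k : ℕ, ∀ s t : ℝ, 0 ≤ s → s ≤ t → t ≤ 1 →
      ∫ ω, (X t ω - X s ω) ^ 2 ∂P ≤ 2 ^ k * C₂ * ((t - s) / 2 ^ k) ^ (2 * H₂) := by
    intro k
    induction k with
    | zero =>
      intro s t hs hst ht
      simpa [abs_of_nonneg (sub_nonneg.2 hst)] using
        hA2 s ⟨hs, le_trans hst ht⟩ t ⟨le_trans hs hst, ht⟩
    | succ k ih =>
      intro s t hs hst ht
      set m := (s + t) / 2 with hm
      have hsm : s ≤ m := by rw [hm]; linarith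
      have hmt : m ≤ t := by rw [hm]; linarith
      have h1 := ih s m hs hsm (le_trans hmt ht)
      have h2 := ih m t (le_trans hs hsm) hmt ht
      have hms : m - s = (t - s) / 2 := by rw [hm]; ring
      have htm : t - m = (t - s) / 2 := by rw [hm]; ring
      have harg : ((t - s) / 2) / 2 ^ k = (t - s) / 2 ^ (k + 1) := by
        rw [pow_succ]; ring
      rw [hms, harg] at h1
      rw [htm, harg] at h2
      have := hsplit s t hs hst ht
      rw [← hm] at this
      calc ∫ ω, (X t ω - X s ω) ^ 2 ∂P
          ≤ (∫ ω, (X m ω - X s ω) ^ 2 ∂P) + (∫ ω, (X t ω - X m ω) ^ 2 ∂P) := this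
        _ ≤ 2 ^ k * C₂ * ((t - s) / 2 ^ (k + 1)) ^ (2 * H₂) +
            2 ^ k * C₂ * ((t - s) / 2 ^ (k + 1)) ^ (2 * H₂) := add_le_add h1 h2
        _ = 2 ^ (k + 1) * C₂ * ((t - s) / 2 ^ (k + 1)) ^ (2 * H₂) := by
            rw [pow_succ]; ring
  -- lower bound
  have h01 : (0 : ℝ) ∈ Set.Icc (0 : ℝ) 1 := ⟨le_rfl, zero_le_one⟩
  have h11 : (1 : ℝ) ∈ Set.Icc (0 : ℝ) 1 := ⟨zero_le_one, le_rfl⟩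
  have hlow : C₁ ≤ ∫ ω, (X 1 ω - X 0 ω) ^ 2 ∂P := by
    have := hA1 0 h01 1 h11
    simpa using this
  -- choose k large
  set r : ℝ := (2 : ℝ) ^ (1 - 2 * H₂) with hr
  have hr_pos : 0 < r := Real.rpow_pos_of_pos two_pos _
  have hr_lt : r < 1 :=
    Real.rpow_lt_one_of_one_lt_of_neg one_lt_two (by linarith)
  obtain ⟨k, hk⟩ := exists_pow_lt_of_lt_one (div_pos hC₁ hC₂) hr_lt
  -- upper bound at level k
  have hup := hdyad k 0 1 le_rfl zero_le_one le_rfl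
  have hcalc : (2 : ℝ) ^ k * ((1 - 0) / 2 ^ k : ℝ) ^ (2 * H₂) = r ^ k := by
    rw [sub_zero, one_div, ← Real.rpow_natCast 2 k,
      ← Real.rpow_neg (by norm_num : (0:ℝ) ≤ 2),
      ← Real.rpow_mul (by norm_num : (0:ℝ) ≤ 2), ← Real.rpow_add two_pos, hr,
      ← Real.rpow_natCast ((2:ℝ) ^ (1 - 2 * H₂)) k,
      ← Real.rpow_mul (by norm_num : (0:ℝ) ≤ 2)]
    congr 1; ring
  have hfinal : C₁ ≤ C₂ * r ^ k := by
    calc C₁ ≤ ∫ ω, (X 1 ω - X 0 ω) ^ 2 ∂P := hlow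
      _ ≤ 2 ^ k * C₂ * ((1 - 0) / 2 ^ k) ^ (2 * H₂) := hup
      _ = C₂ * ((2 : ℝ) ^ k * ((1 - 0) / 2 ^ k : ℝ) ^ (2 * H₂)) := by ring
      _ = C₂ * r ^ k := by rw [hcalc]
  have : C₂ * r ^ k < C₂ * (C₁ / C₂) := by
    exact mul_lt_mul_of_pos_left hk hC₂
  rw [mul_div_cancel₀ _ (ne_of_gt hC₂)] at this
  linarith
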